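/- Let n ≥ 1 and N ∈ ℕ. Suppose A₁,…,A_N ∈ ℚ[S,T] are polynomials such that each specialization A_j(0,T) ∈ ℚ[T] is a constant polynomial, and suppose there exist polynomials Q₀,…,Q_{2ⁿ−1} ∈ ℚ[Z₁,…,Z_N] such that for every 0 ≤ l < 2ⁿ, Q_l(A₁,…,A_N) equals the negative of the coefficient of the monomial U^l·Y^{2ⁿ−1} in P := ∏_{l'=0}^{2ⁿ−1} (Y − U^{l'}·c_{l'}). Then N ≥ 2ⁿ. -/

import Mathlib

open MvPolynomial

set_option maxRecDepth 4000

/-- The index set of pairs `(p,q)` with `0 ≤ p,q < 2^n` and `p + q = 2^n - 1`. -/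
def pairs (n : ℕ) : Finset (ℕ × ℕ) :=
  (Finset.range (2 ^ n) ×ˢ Finset.range (2 ^ n)).filter
    (fun pq => pq.1 + pq.2 = 2 ^ n - 1)

/-- `c l := 1 + S·∑_{(p,q) ∈ pairs n} T^p·l^q ∈ ℚ[S,T]`, with `S = X 0`, `T = X 1`. -/
noncomputable def c (n l : ℕ) : MvPolynomial (Fin 2) ℚ :=
  1 + X 0 * ∑ pq ∈ pairs n, X 1 ^ pq.1 * C ((l : ℚ) ^ pq.2)

/-- `P := ∏_{l=0}^{2^n-1} (Y - U^l·c_l)`, regarded as a polynomial in `Y` over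
`ℚ[S,T,U]`, the latter being represented as polynomials in `U` over `ℚ[S,T]`. -/
noncomputable def P (n : ℕ) : Polynomial (Polynomial (MvPolynomial (Fin 2) ℚ)) :=
  ∏ l ∈ Finset.range (2 ^ n),
    (Polynomial.X - Polynomial.C (Polynomial.X ^ l * Polynomial.C (c n l)))

lemma coeffP (n : ℕ) (l : ℕ) (hl : l < 2 ^ n) :
    ((P n).coeff (2 ^ n - 1)).coeff l = -(c n l) := by
  have h1 : (P n).coeff (2 ^ n - 1)
      = -∑ l' ∈ Finset.range (2 ^ n), Polynomial.X ^ l' * Polynomial.C (c n l') := by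
    have := Polynomial.prod_X_sub_C_coeff_card_pred (Finset.range (2 ^ n))
      (fun l' => Polynomial.X ^ l' * Polynomial.C (c n l')) (by simp)
    simpa [P] using this
  rw [h1]
  rw [Polynomial.coeff_neg, Polynomial.finset_sum_coeff]
  have h2 : ∀ l' : ℕ, (Polynomial.X ^ l' * Polynomial.C (c n l')).coeff l
      = if l' = l then c n l' else 0 := by
    intro l'
    rw [mul_comm, Polynomial.C_mul_X_pow_eq_monomial, Polynomial.coeff_monomial]
  simp_rw [h2]
  rw [Finset.sum_ite_eq' (Finset.range (2 ^ n)) l (fun l' => c n l')]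
  simp [Finset.mem_range.mpr hl]

/-- The "dual numbers at `S = 0`" specialization `S ↦ ε`, `T ↦ X`. -/
noncomputable def ψ : MvPolynomial (Fin 2) ℚ →ₐ[ℚ] DualNumber (Polynomial ℚ) :=
  aeval ![DualNumber.eps, TrivSqZeroExt.inl Polynomial.X]

/-- The linear part in `S` of `c n l`. -/
noncomputable def w (n l : ℕ) : Polynomial ℚ :=
  ∑ pq ∈ pairs n, Polynomial.X ^ pq.1 * Polynomial.C ((l : ℚ) ^ pq.2)

lemma psi_X0 : ψ (X 0) = DualNumber.eps := by simp [ψ]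
lemma psi_X1 : ψ (X 1) = TrivSqZeroExt.inl Polynomial.X := by simp [ψ]
lemma psi_C (r : ℚ) : ψ (C r) = TrivSqZeroExt.inl (Polynomial.C r) := by
  rw [MvPolynomial.algHom_C, TrivSqZeroExt.algebraMap_eq_inl']
  simp [Polynomial.C_eq_algebraMap]

lemma psi_sum (n l : ℕ) :
    ψ (∑ pq ∈ pairs n, X 1 ^ pq.1 * C ((l : ℚ) ^ pq.2))
      = TrivSqZeroExt.inl (w n l) := by
  rw [map_sum, w, TrivSqZeroExt.inl_sum]
  refine Finset.sum_congr rfl fun pq _ => ?_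
  rw [map_mul, map_pow, psi_X1, psi_C]
  simp [TrivSqZeroExt.inl_pow, TrivSqZeroExt.inl_mul]

lemma snd_psi_c (n l : ℕ) : (ψ (c n l)).snd = w n l := by
  rw [c, map_add, map_mul, psi_sum, psi_X0]
  rw [TrivSqZeroExt.snd_add, map_one, TrivSqZeroExt.snd_one, TrivSqZeroExt.snd_mul,
    TrivSqZeroExt.snd_inl, DualNumber.fst_eps, DualNumber.snd_eps, TrivSqZeroExt.fst_inl]
  simp

lemma fst_psi (f : MvPolynomial (Fin 2) ℚ) :
    (ψ f).fst = aeval ![(0 : Polynomial ℚ), Polynomial.X] f := by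
  have h : (TrivSqZeroExt.fstHom ℚ (Polynomial ℚ) (Polynomial ℚ)).comp ψ
      = aeval ![(0 : Polynomial ℚ), Polynomial.X] := by
    apply MvPolynomial.algHom_ext
    intro i
    fin_cases i
    · show ((TrivSqZeroExt.fstHom ℚ (Polynomial ℚ) (Polynomial ℚ)).comp ψ) (X 0) = _
      rw [AlgHom.comp_apply, psi_X0]
      simp [TrivSqZeroExt.fstHom_apply, DualNumber.fst_eps]
    · show ((TrivSqZeroExt.fstHom ℚ (Polynomial ℚ) (Polynomial ℚ)).comp ψ) (X 1) = _
      rw [AlgHom.comp_apply, psi_X1]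
      simp [TrivSqZeroExt.fstHom_apply]
  exact congrFun (congrArg DFunLike.coe h) f

/-- The subalgebra of dual numbers whose constant part is a rational constant and
whose infinitesimal part lies in a given `ℚ`-submodule. -/
noncomputable def subR (W : Submodule ℚ (Polynomial ℚ)) :
    Subalgebra ℚ (DualNumber (Polynomial ℚ)) where
  carrier := {x | (∃ a : ℚ, x.fst = Polynomial.C a) ∧ x.snd ∈ W}
  one_mem' := ⟨⟨1, by simp⟩, by simp⟩
  mul_mem' := by
    rintro x y ⟨⟨a, ha⟩, hx⟩ ⟨⟨b, hb⟩, hy⟩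
    refine ⟨⟨a * b, by rw [TrivSqZeroExt.fst_mul, ha, hb, map_mul]⟩, ?_⟩
    rw [TrivSqZeroExt.snd_mul, ha, hb]
    have h1 : (Polynomial.C a) • y.snd = a • y.snd := by
      rw [Polynomial.smul_eq_C_mul, smul_eq_mul]
    have h2 : (MulOpposite.op (Polynomial.C b)) • x.snd = b • x.snd := by
      rw [MulOpposite.smul_eq_mul_unop, MulOpposite.unop_op, mul_comm,
        Polynomial.smul_eq_C_mul]
    rw [h1, h2]
    exact W.add_mem (W.smul_mem _ hy) (W.smul_mem _ hx)
  add_mem' := by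
    rintro x y ⟨⟨a, ha⟩, hx⟩ ⟨⟨b, hb⟩, hy⟩
    exact ⟨⟨a + b, by rw [TrivSqZeroExt.fst_add, ha, hb, map_add]⟩, W.add_mem hx hy⟩
  algebraMap_mem' := fun r => ⟨⟨r, by simp [TrivSqZeroExt.algebraMap_eq_inl']⟩,
    by simp [TrivSqZeroExt.algebraMap_eq_inl']⟩

lemma pairs_eq (n : ℕ) :
    pairs n = (Finset.range (2 ^ n)).image (fun p => (p, 2 ^ n - 1 - p)) := by
  have h1 : 1 ≤ 2 ^ n := Nat.one_le_two_pow
  ext ⟨p, q⟩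
  simp only [pairs, Finset.mem_filter, Finset.mem_product, Finset.mem_range,
    Finset.mem_image]
  constructor
  · rintro ⟨⟨hp, hq⟩, hpq⟩
    exact ⟨p, hp, by simp; omega⟩
  · rintro ⟨p', hp', h⟩
    have : p' = p ∧ 2 ^ n - 1 - p' = q := by
      constructor <;> [exact congrArg Prod.fst h; exact congrArg Prod.snd h]
    omega

lemma w_eq (n l : ℕ) :
    w n l = ∑ p ∈ Finset.range (2 ^ n),
      Polynomial.X ^ p * Polynomial.C ((l : ℚ) ^ (2 ^ n - 1 - p)) := by
  rw [w, pairs_eq, Finset.sum_image]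
  intro a _ b _ h
  exact congrArg Prod.fst h

lemma coeff_w (n l k : ℕ) (hk : k < 2 ^ n) :
    (w n l).coeff k = (l : ℚ) ^ (2 ^ n - 1 - k) := by
  rw [w_eq, Polynomial.finset_sum_coeff]
  have h2 : ∀ p : ℕ, (Polynomial.X ^ p * Polynomial.C ((l:ℚ) ^ (2^n-1-p))).coeff k
      = if p = k then (l:ℚ) ^ (2^n-1-p) else 0 := by
    intro p
    rw [mul_comm, Polynomial.C_mul_X_pow_eq_monomial, Polynomial.coeff_monomial]
  simp_rw [h2]
  rw [Finset.sum_ite_eq' (Finset.range (2 ^ n)) k]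
  simp [Finset.mem_range.mpr hk]

lemma w_li (n : ℕ) : LinearIndependent ℚ (fun l : Fin (2 ^ n) => w n (l : ℕ)) := by
  set v : Fin (2 ^ n) → ℚ := fun l => ((l : ℕ) : ℚ) with hv
  set M : Matrix (Fin (2 ^ n)) (Fin (2 ^ n)) ℚ :=
    (Matrix.vandermonde v).submatrix id Fin.rev with hM
  have hMunit : IsUnit M := by
    rw [Matrix.isUnit_iff_isUnit_det, hM]
    have : ((Matrix.vandermonde v).submatrix id ⇑(Fin.revPerm)).det
        = ((Equiv.Perm.sign Fin.revPerm : ℤ) : ℚ) * (Matrix.vandermonde v).det :=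
      Matrix.det_permute' Fin.revPerm (Matrix.vandermonde v)
    rw [show (Fin.rev : Fin (2^n) → Fin (2^n)) = ⇑(Fin.revPerm) from rfl, this]
    have hdet : (Matrix.vandermonde v).det ≠ 0 := by
      rw [Matrix.det_vandermonde_ne_zero_iff]
      intro a b hab
      exact Fin.val_injective (Nat.cast_injective hab)
    rcases Int.units_eq_one_or (Equiv.Perm.sign (Fin.revPerm (n := 2^n))) with h | h <;>
      simp [h, hdet, isUnit_iff_ne_zero]
  have hrows : LinearIndependent ℚ (fun l => M l) :=
    Matrix.linearIndependent_rows_iff_isUnit.2 hMunit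
  set L : Polynomial ℚ →ₗ[ℚ] (Fin (2 ^ n) → ℚ) :=
    LinearMap.pi (fun k : Fin (2 ^ n) => Polynomial.lcoeff ℚ (k : ℕ)) with hL
  apply LinearIndependent.of_comp L
  have : (L ∘ fun l : Fin (2 ^ n) => w n (l : ℕ)) = fun l => M l := by
    funext l
    funext k
    show (w n (l : ℕ)).coeff (k : ℕ) = M l k
    rw [coeff_w n l k k.isLt, hM]
    simp only [Matrix.submatrix_apply, id, Matrix.vandermonde_apply, hv]
    congr 1
    rw [Fin.val_rev]
    omega
  rw [this]
  exact hrows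

/-- If `A₁,…,A_N ∈ ℚ[S,T]` specialize at `S := 0` to constant polynomials and there
exist `Q₀,…,Q_{2^n-1} ∈ ℚ[Z₁,…,Z_N]` such that `Q_l(A₁,…,A_N)` equals the negative
of the coefficient of the monomial `U^l·Y^(2^n-1)` in `P`, then `N ≥ 2^n`. -/
theorem stmt10 (n : ℕ) (hn : 1 ≤ n) (N : ℕ)
    (A : Fin N → MvPolynomial (Fin 2) ℚ)
    (hA : ∀ j, ∃ a : ℚ,
      aeval ![(0 : Polynomial ℚ), Polynomial.X] (A j) = Polynomial.C a)
    (Q : Fin (2 ^ n) → MvPolynomial (Fin N) ℚ)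
    (hQ : ∀ l : Fin (2 ^ n),
      aeval A (Q l) = -(((P n).coeff (2 ^ n - 1)).coeff (l : ℕ))) :
    2 ^ n ≤ N := by
  have hc : ∀ l : Fin (2 ^ n), aeval A (Q l) = c n (l : ℕ) := by
    intro l
    rw [hQ l, coeffP n l l.isLt, neg_neg]
  set B : Fin N → Polynomial ℚ := fun j => (ψ (A j)).snd with hB
  set W : Submodule ℚ (Polynomial ℚ) := Submodule.span ℚ (Set.range B) with hW
  have hmem : ∀ j, ψ (A j) ∈ subR W := by
    intro j
    obtain ⟨a, ha⟩ := hA j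
    exact ⟨⟨a, by rw [fst_psi]; exact ha⟩, Submodule.subset_span ⟨j, rfl⟩⟩
  have haev : ∀ l : Fin (2 ^ n), ψ (aeval A (Q l)) ∈ subR W := by
    intro l
    rw [MvPolynomial.comp_aeval_apply]
    have h2 : aeval (fun j => ψ (A j)) (Q l)
        ∈ Algebra.adjoin ℚ (Set.range fun j => ψ (A j)) := by
      rw [Algebra.adjoin_range_eq_range_aeval]
      exact ⟨Q l, rfl⟩
    exact Algebra.adjoin_le (Set.range_subset_iff.mpr hmem) h2
  have hwW : ∀ l : Fin (2 ^ n), w n (l : ℕ) ∈ W := by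
    intro l
    have h3 := (haev l).2
    rwa [hc l, snd_psi_c] at h3
  haveI : FiniteDimensional ℚ W :=
    FiniteDimensional.span_of_finite ℚ (Set.finite_range B)
  have li' : LinearIndependent ℚ
      (fun l : Fin (2 ^ n) => (⟨w n (l : ℕ), hwW l⟩ : W)) := by
    apply LinearIndependent.of_comp W.subtype
    exact w_li n
  have h1 := li'.fintype_card_le_finrank
  have h2 : Module.finrank ℚ W ≤ N := by
    have := finrank_range_le_card (R := ℚ) B
    simpa [Set.finrank] using this
  simpa using h1.trans h2
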